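/- arXiv:2301.12878 — 6 statements merged into one kernel-verified Lean document; each statement's English description precedes it below -/
import Mathlib

section
/- There exists an absolute constant c > 0 with the following property. Let j ≥ 1 be an integer and let n₁, …, n_{j+1} be integers ≥ 2. Suppose there exist a prime number p and a positive integer n coprime to p such that p ≤ nᵢ for all 1 ≤ i ≤ j, n ≤ n_{j+1}, and |p^j + 1 − n| ≤ 2·p^{j/2}. Then the abelian group A = ∏_{i=1}^{j+1} ℤ/nᵢℤ contains a Sidon set S with |S| ≥ c·(p/2)^j. -/
/-- A subset `S` of an abelian group is a *Sidon set* if every additive quadruple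
`x₁ + x₂ = x₃ + x₄` in `S` satisfies `x₁ = x₃` or `x₁ = x₄`. -/
def IsSidonSet {A : Type*} [AddCommGroup A] (S : Set A) : Prop :=
  ∀ x₁ ∈ S, ∀ x₂ ∈ S, ∀ x₃ ∈ S, ∀ x₄ ∈ S,
    x₁ + x₂ = x₃ + x₄ → x₁ = x₃ ∨ x₁ = x₄

/-- Reconstruction of a natural number from its base-`b` digits. -/
lemma sum_digits_eq (b : ℕ) (hb : 0 < b) :
    ∀ (j a : ℕ), a < b ^ j → (∑ i ∈ Finset.range j, a / b ^ i % b * b ^ i) = a := by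
  intro j
  induction j with
  | zero =>
    intro a ha
    rw [pow_zero, Nat.lt_one_iff] at ha
    simp [ha]
  | succ k ih =>
    intro a ha
    rw [Finset.sum_range_succ']
    have h1 : ∀ i : ℕ, a / b ^ (i + 1) = a / b / b ^ i := by
      intro i
      rw [Nat.div_div_eq_div_mul, pow_succ, mul_comm (b ^ i) b, ← Nat.div_div_eq_div_mul]
    have h2 : a / b < b ^ k := by
      rw [Nat.div_lt_iff_lt_mul hb, ← pow_succ]; exact ha
    have h3 := ih (a / b) h2
    have h4 : ∀ i : ℕ, a / b ^ (i + 1) % b * b ^ (i + 1) = a / b / b ^ i % b * b ^ i * b := by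
      intro i; rw [h1 i, pow_succ]; ring
    calc (∑ i ∈ Finset.range k, a / b ^ (i + 1) % b * b ^ (i + 1)) + a / b ^ 0 % b * b ^ 0
        = (∑ i ∈ Finset.range k, a / b / b ^ i % b * b ^ i) * b + a % b := by
          rw [Finset.sum_mul]
          simp only [pow_zero, mul_one, Nat.div_one]
          exact congrArg₂ (· + ·) (Finset.sum_congr rfl fun i _ => h4 i) rfl
      _ = a / b * b + a % b := by rw [h3]
      _ = a := Nat.div_add_mod' a b

lemma zmod_nat_inj {m u v : ℕ} (hu : u < m) (hv : v < m) (h : (u : ZMod m) = v) : u = v := by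
  have := congrArg ZMod.val h
  rwa [ZMod.val_cast_of_lt hu, ZMod.val_cast_of_lt hv] at this

/-- Two pairs with the same sum and same sum of squares in a field of odd prime order
agree up to swapping. -/
lemma quad_roots {m : ℕ} (hm : m.Prime) (hm3 : 3 ≤ m) (A B C D : ZMod m)
    (e1 : A + B = C + D) (esq : A ^ 2 + B ^ 2 = C ^ 2 + D ^ 2) : A = C ∨ A = D := by
  haveI : Fact m.Prime := ⟨hm⟩
  have h2ne : (2 : ZMod m) ≠ 0 := by
    intro h
    have h2 : ((2 : ℕ) : ZMod m) = 0 := by exact_mod_cast h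
    rw [ZMod.natCast_eq_zero_iff] at h2
    have := Nat.le_of_dvd (by norm_num) h2
    omega
  have e3 : A * B = C * D := by
    apply mul_left_cancel₀ h2ne
    linear_combination (A + B + C + D) * e1 - esq
  have h5 : (A - C) * (A - D) = 0 := by linear_combination A * e1 - e3
  rcases mul_eq_zero.mp h5 with h | h
  · exact Or.inl (sub_eq_zero.mp h)
  · exact Or.inr (sub_eq_zero.mp h)

/-- The explicit Sidon set: base-`b` digits in the first `j` coordinates, and a
square modulo `m` in the last coordinate (an Erdős–Turán style construction). -/
lemma sidon_construction {j : ℕ} (N : Fin (j + 1) → ℕ) (b m : ℕ)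
    (hb : 0 < b) (hm : m.Prime) (hm3 : 3 ≤ m)
    (hbN : ∀ i : Fin (j + 1), (i : ℕ) < j → 2 * b ≤ N i + 1)
    (hmN : 2 * m ≤ N (Fin.last j)) :
    ∃ S : Finset (∀ i, ZMod (N i)), IsSidonSet (S : Set (∀ i, ZMod (N i))) ∧
      S.card = min m (b ^ j) := by
  classical
  set M := min m (b ^ j) with hM
  set x : ℕ → ∀ i : Fin (j + 1), ZMod (N i) :=
    fun a i => if (i : ℕ) < j then ((a / b ^ (i : ℕ) % b : ℕ) : ZMod (N i))
      else ((a ^ 2 % m : ℕ) : ZMod (N i)) with hx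
  have key : ∀ a₁ a₂ a₃ a₄ : ℕ, a₁ < M → a₂ < M → a₃ < M → a₄ < M →
      x a₁ + x a₂ = x a₃ + x a₄ → (a₁ = a₃ ∧ a₂ = a₄) ∨ (a₁ = a₄ ∧ a₂ = a₃) := by
    intro a₁ a₂ a₃ a₄ h1 h2 h3 h4 heq
    have hMm : M ≤ m := min_le_left _ _
    have hMb : M ≤ b ^ j := min_le_right _ _
    have hdig : ∀ i : ℕ, i < j →
        a₁ / b ^ i % b + a₂ / b ^ i % b = a₃ / b ^ i % b + a₄ / b ^ i % b := by
      intro i hi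
      have hij : i < j + 1 := by omega
      have h := congrFun heq ⟨i, hij⟩
      simp only [Pi.add_apply, hx] at h
      rw [if_pos hi, if_pos hi, if_pos hi, if_pos hi] at h
      have hNi := hbN ⟨i, hij⟩ hi
      have b1 : a₁ / b ^ i % b < b := Nat.mod_lt _ hb
      have b2 : a₂ / b ^ i % b < b := Nat.mod_lt _ hb
      have b3 : a₃ / b ^ i % b < b := Nat.mod_lt _ hb
      have b4 : a₄ / b ^ i % b < b := Nat.mod_lt _ hb
      have h' : ((a₁ / b ^ i % b + a₂ / b ^ i % b : ℕ) : ZMod (N ⟨i, hij⟩)) =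
          ((a₃ / b ^ i % b + a₄ / b ^ i % b : ℕ) : ZMod (N ⟨i, hij⟩)) := by
        push_cast
        exact h
      exact zmod_nat_inj (by omega) (by omega) h'
    have habcd : a₁ + a₂ = a₃ + a₄ := by
      have r1 := sum_digits_eq b hb j a₁ (lt_of_lt_of_le h1 hMb)
      have r2 := sum_digits_eq b hb j a₂ (lt_of_lt_of_le h2 hMb)
      have r3 := sum_digits_eq b hb j a₃ (lt_of_lt_of_le h3 hMb)
      have r4 := sum_digits_eq b hb j a₄ (lt_of_lt_of_le h4 hMb)
      have e : (∑ i ∈ Finset.range j, a₁ / b ^ i % b * b ^ i) +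
          (∑ i ∈ Finset.range j, a₂ / b ^ i % b * b ^ i) =
          (∑ i ∈ Finset.range j, a₃ / b ^ i % b * b ^ i) +
          (∑ i ∈ Finset.range j, a₄ / b ^ i % b * b ^ i) := by
        rw [← Finset.sum_add_distrib, ← Finset.sum_add_distrib]
        refine Finset.sum_congr rfl fun i hi => ?_
        rw [Finset.mem_range] at hi
        rw [← add_mul, ← add_mul, hdig i hi]
      rwa [r1, r2, r3, r4] at e
    have hlast : a₁ ^ 2 % m + a₂ ^ 2 % m = a₃ ^ 2 % m + a₄ ^ 2 % m := by
      have h := congrFun heq (Fin.last j)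
      simp only [Pi.add_apply, hx, Fin.val_last, lt_self_iff_false, if_false] at h
      have hm0 : 0 < m := hm.pos
      have b1 : a₁ ^ 2 % m < m := Nat.mod_lt _ hm0
      have b2 : a₂ ^ 2 % m < m := Nat.mod_lt _ hm0
      have b3 : a₃ ^ 2 % m < m := Nat.mod_lt _ hm0
      have b4 : a₄ ^ 2 % m < m := Nat.mod_lt _ hm0
      have h' : ((a₁ ^ 2 % m + a₂ ^ 2 % m : ℕ) : ZMod (N (Fin.last j))) =
          ((a₃ ^ 2 % m + a₄ ^ 2 % m : ℕ) : ZMod (N (Fin.last j))) := by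
        push_cast
        exact h
      exact zmod_nat_inj (by omega) (by omega) h'
    have e1 : (a₁ : ZMod m) + a₂ = (a₃ : ZMod m) + a₄ := by
      have := congrArg (Nat.cast : ℕ → ZMod m) habcd
      push_cast at this
      exact this
    have esq : (a₁ : ZMod m) ^ 2 + (a₂ : ZMod m) ^ 2 =
        (a₃ : ZMod m) ^ 2 + (a₄ : ZMod m) ^ 2 := by
      have := congrArg (Nat.cast : ℕ → ZMod m) hlast
      push_cast [ZMod.natCast_mod] at this
      exact this
    rcases quad_roots hm hm3 _ _ _ _ e1 esq with h | h
    · exact Or.inl ⟨zmod_nat_inj (by omega) (by omega) h, by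
        have := zmod_nat_inj (show a₁ < m by omega) (show a₃ < m by omega) h
        omega⟩
    · exact Or.inr ⟨zmod_nat_inj (by omega) (by omega) h, by
        have := zmod_nat_inj (show a₁ < m by omega) (show a₄ < m by omega) h
        omega⟩
  have hinj : Set.InjOn x (Finset.range M) := by
    intro u hu v hv huv
    simp only [Finset.coe_range, Set.mem_Iio] at hu hv
    rcases key u u v v hu hu hv hv (by rw [huv]) with ⟨h, _⟩ | ⟨h, _⟩ <;> exact h
  refine ⟨(Finset.range M).image x, ?_, ?_⟩
  · intro x₁ h₁ x₂ h₂ x₃ h₃ x₄ h₄ hsum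
    simp only [Finset.coe_image, Set.mem_image, Finset.mem_coe, Finset.mem_range] at h₁ h₂ h₃ h₄
    obtain ⟨a₁, ha₁, rfl⟩ := h₁
    obtain ⟨a₂, ha₂, rfl⟩ := h₂
    obtain ⟨a₃, ha₃, rfl⟩ := h₃
    obtain ⟨a₄, ha₄, rfl⟩ := h₄
    rcases key a₁ a₂ a₃ a₄ ha₁ ha₂ ha₃ ha₄ hsum with ⟨h, _⟩ | ⟨h, _⟩
    · exact Or.inl (by rw [h])
    · exact Or.inr (by rw [h])
  · rw [Finset.card_image_of_injOn hinj, Finset.card_range]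

/-- Arithmetic: in the non-degenerate range, there is a suitable odd prime `m`. -/
lemma exists_good_prime (j : ℕ) (p n : ℕ) (hp : p.Prime) (hn : 0 < n)
    (habs : |(p : ℝ) ^ j + 1 - (n : ℝ)| ≤ 2 * (p : ℝ) ^ ((j : ℝ) / 2))
    (hQ : ¬ p ^ j < 16) :
    ∃ m, m.Prime ∧ 3 ≤ m ∧ 2 * m ≤ n ∧ p ^ j ≤ 8 * m := by
  push_neg at hQ
  have hppos : (0 : ℝ) < p := by exact_mod_cast hp.pos
  have hrw : (p : ℝ) ^ ((j : ℝ) / 2) = Real.sqrt ((p : ℝ) ^ j) := by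
    rw [Real.sqrt_eq_rpow, ← Real.rpow_natCast (p : ℝ) j, ← Real.rpow_mul hppos.le,
      mul_one_div]
  have hQR : (16 : ℝ) ≤ (p : ℝ) ^ j := by exact_mod_cast hQ
  have hsq : Real.sqrt ((p : ℝ) ^ j) ≤ (p : ℝ) ^ j / 4 := by
    calc Real.sqrt ((p : ℝ) ^ j) ≤ Real.sqrt (((p : ℝ) ^ j / 4) ^ 2) :=
          Real.sqrt_le_sqrt (by nlinarith)
      _ = (p : ℝ) ^ j / 4 := Real.sqrt_sq (by positivity)
  have hub := (abs_le.mp habs).2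
  rw [hrw] at hub
  have hn2 : ((p ^ j + 2 : ℕ) : ℝ) ≤ ((2 * n : ℕ) : ℝ) := by push_cast; linarith
  have hn2' : p ^ j + 2 ≤ 2 * n := by exact_mod_cast hn2
  obtain ⟨Q, hQdef⟩ : ∃ Q, p ^ j = Q := ⟨_, rfl⟩
  rw [hQdef] at hn2' hQ ⊢
  have ht : 2 ≤ n / 4 := by omega
  obtain ⟨m, hmp, hm1, hm2⟩ := Nat.exists_prime_lt_and_le_two_mul (n / 4) (by omega)
  exact ⟨m, hmp, by omega, by omega, by omega⟩

/-- There is an absolute constant `c > 0` such that: for any `j ≥ 1`, any integers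
`n₁, …, n_{j+1} ≥ 2`, any prime `p` and any positive integer `n` coprime to `p`
with `p ≤ nᵢ` for `1 ≤ i ≤ j`, `n ≤ n_{j+1}` and `|p^j + 1 - n| ≤ 2 p^{j/2}`, the
abelian group `A = ∏ ℤ/nᵢℤ` contains a Sidon set of size at least `c (p/2)^j`. -/
theorem exists_sidon_in_products :
    ∃ c : ℝ, 0 < c ∧
      ∀ (j : ℕ), 1 ≤ j → ∀ (N : Fin (j + 1) → ℕ), (∀ i, 2 ≤ N i) →
        ∀ (p n : ℕ), p.Prime → 0 < n → Nat.Coprime n p →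
          (∀ i : Fin j, p ≤ N i.castSucc) → n ≤ N (Fin.last j) →
          |(p : ℝ) ^ j + 1 - (n : ℝ)| ≤ 2 * (p : ℝ) ^ ((j : ℝ) / 2) →
          ∃ S : Finset (∀ i, ZMod (N i)),
            IsSidonSet (S : Set (∀ i, ZMod (N i))) ∧
            c * ((p : ℝ) / 2) ^ j ≤ (S.card : ℝ) := by
  refine ⟨1 / 16, by norm_num, ?_⟩
  intro j hj N hN p n hp hn hcop hpN hnN habs
  by_cases hQ : p ^ j < 16
  · -- degenerate case: a singleton Sidon set suffices
    refine ⟨{fun _ => 0}, ?_, ?_⟩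
    · intro x₁ h₁ x₂ h₂ x₃ h₃ x₄ h₄ _
      left
      simp only [Finset.coe_singleton, Set.mem_singleton_iff] at h₁ h₃
      rw [h₁, h₃]
    · rw [Finset.card_singleton]
      have h2 : ((p : ℝ)) ^ j < 16 := by exact_mod_cast hQ
      have h3 : (2 : ℝ) ≤ 2 ^ j := by
        calc (2 : ℝ) = 2 ^ 1 := (pow_one 2).symm
          _ ≤ 2 ^ j := pow_le_pow_right₀ (by norm_num) hj
      have hple : ((p : ℝ) / 2) ^ j ≤ 8 := by
        rw [div_pow, div_le_iff₀ (by positivity)]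
        nlinarith
      push_cast
      linarith
  · obtain ⟨m, hmp, hm3, hmn, hm8⟩ := exists_good_prime j p n hp hn habs hQ
    have hp2 : 2 ≤ p := hp.two_le
    set b := (p + 1) / 2 with hbdef
    have hbpos : 0 < b := by omega
    have hbN : ∀ i : Fin (j + 1), (i : ℕ) < j → 2 * b ≤ N i + 1 := by
      intro i hi
      have h := hpN ⟨(i : ℕ), hi⟩
      have hcast : Fin.castSucc ⟨(i : ℕ), hi⟩ = i := by
        ext; simp
      rw [hcast] at h
      omega
    have hmN : 2 * m ≤ N (Fin.last j) := le_trans hmn hnN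
    obtain ⟨S, hS, hcard⟩ := sidon_construction N b m hbpos hmp hm3 hbN hmN
    refine ⟨S, hS, ?_⟩
    rw [hcard]
    have hkey : p ^ j ≤ 16 * min m (b ^ j) * 2 ^ j := by
      have h2j : 2 ≤ 2 ^ j := by
        calc 2 = 2 ^ 1 := (pow_one 2).symm
          _ ≤ 2 ^ j := Nat.pow_le_pow_right (by norm_num) hj
      rcases min_cases m (b ^ j) with ⟨hmin, _⟩ | ⟨hmin, _⟩ <;> rw [hmin]
      · calc p ^ j ≤ 8 * m := hm8
          _ ≤ 16 * m * 2 := by omega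
          _ ≤ 16 * m * 2 ^ j := Nat.mul_le_mul_left _ h2j
      · calc p ^ j ≤ (2 * b) ^ j := Nat.pow_le_pow_left (by omega) j
          _ = 2 ^ j * b ^ j := mul_pow 2 b j
          _ ≤ 16 * (2 ^ j * b ^ j) := Nat.le_mul_of_pos_left _ (by norm_num)
          _ = 16 * b ^ j * 2 ^ j := by ring
    have hkeyR : ((p : ℝ)) ^ j ≤ 16 * (min m (b ^ j) : ℕ) * 2 ^ j := by
      exact_mod_cast hkey
    have h2pos : (0 : ℝ) < 2 ^ j := by positivity
    calc (1 / 16 : ℝ) * ((p : ℝ) / 2) ^ j = (p : ℝ) ^ j / (16 * 2 ^ j) := by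
          rw [div_pow]; ring
      _ ≤ ((min m (b ^ j) : ℕ) : ℝ) := by
          rw [div_le_iff₀ (by positivity)]
          linarith
end

section
/- Let k be a field. Then the set S = {(x, 1−x) : x ∈ k, x ≠ 0, x ≠ 1} is a Sidon set in the abelian group kˣ × kˣ; that is, if x₁, x₂, x₃, x₄ ∈ k \ {0,1} satisfy x₁·x₂ = x₃·x₄ and (1−x₁)·(1−x₂) = (1−x₃)·(1−x₄), then x₁ = x₃ or x₁ = x₄. -/
/-- A subset `S` of a multiplicatively-written abelian group is a *Sidon set* if
every quadruple `x₁ * x₂ = x₃ * x₄` in `S` satisfies `x₁ = x₃` or `x₁ = x₄`. -/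
def IsMulSidonSet {G : Type*} [CommGroup G] (S : Set G) : Prop :=
  ∀ x₁ ∈ S, ∀ x₂ ∈ S, ∀ x₃ ∈ S, ∀ x₄ ∈ S,
    x₁ * x₂ = x₃ * x₄ → x₁ = x₃ ∨ x₁ = x₄

/-- For any field `k`, the set `{(x, 1 - x) : x ∈ k, x ≠ 0, x ≠ 1}` is a Sidon set
in the abelian group `kˣ × kˣ`. -/
theorem erdos_turan_sidon (k : Type*) [Field k] :
    IsMulSidonSet {p : kˣ × kˣ | (p.2 : k) = 1 - (p.1 : k)} := by
  intro p1 h1 p2 h2 p3 h3 p4 h4 hmul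
  simp only [Set.mem_setOf_eq] at h1 h2 h3 h4
  have hfst : (p1.1 : k) * p2.1 = (p3.1 : k) * p4.1 := by
    have := congrArg (fun q : kˣ × kˣ => (q.1 : k)) hmul
    simpa using this
  have hsnd : (p1.2 : k) * p2.2 = (p3.2 : k) * p4.2 := by
    have := congrArg (fun q : kˣ × kˣ => (q.2 : k)) hmul
    simpa using this
  rw [h1, h2, h3, h4] at hsnd
  -- same sum
  have hsum : (p1.1 : k) + p2.1 = (p3.1 : k) + p4.1 := by
    linear_combination hfst - hsnd
  have hkey : ((p1.1 : k) - p3.1) * ((p1.1 : k) - p4.1) = 0 := by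
    have h2ne : (p2.1 : k) ≠ 0 := p2.1.ne_zero
    have : ((p1.1 : k) - p3.1) * ((p1.1 : k) - p4.1) * p2.1 = 0 := by
      linear_combination (-(p2.1 : k)) * hfst + (p1.1 : k) * (p2.1 : k) * hsum
    rcases mul_eq_zero.1 this with h | h
    · exact h
    · exact absurd h h2ne
  rcases mul_eq_zero.1 hkey with h | h
  · left
    have e1 : (p1.1 : k) = p3.1 := sub_eq_zero.1 h
    have e2 : (p1.2 : k) = p3.2 := by rw [h1, h3, e1]
    exact Prod.ext (Units.ext e1) (Units.ext e2)
  · right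
    have e1 : (p1.1 : k) = p4.1 := sub_eq_zero.1 h
    have e2 : (p1.2 : k) = p4.2 := by rw [h1, h4, e1]
    exact Prod.ext (Units.ext e1) (Units.ext e2)
end

section
/- Let k ⊆ K be a field extension and let θ ∈ K be such that 1, θ, θ² are linearly independent over k. Consider the quotient group G = Kˣ/kˣ of the multiplicative group of K by the image of kˣ. Then the image in G of the set {aθ + b : a, b ∈ k, (a,b) ≠ (0,0)} is a Sidon set in G. (This is Singer's construction, to which the paper's Sidon set S₄, arising from the modulus (a)+(b)+(c) on ℙ¹ with a, b, c the roots of an irreducible cubic, corresponds.) -/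
lemma prop_lemma {k : Type*} [Field k] {a b a' b' : k}
    (h : ¬(a = 0 ∧ b = 0)) (h' : ¬(a' = 0 ∧ b' = 0))
    (hd : a * b' - a' * b = 0) :
    ∃ l : k, l ≠ 0 ∧ a = l * a' ∧ b = l * b' := by
  by_cases ha' : a' = 0
  · have hb' : b' ≠ 0 := fun hb => h' ⟨ha', hb⟩
    have ha : a = 0 := by
      have h1 : a * b' = 0 := by rw [ha'] at hd; linear_combination hd
      rcases mul_eq_zero.mp h1 with h2 | h2
      · exact h2
      · exact absurd h2 hb'
    have hb : b ≠ 0 := fun hb => h ⟨ha, hb⟩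
    exact ⟨b / b', div_ne_zero hb hb', by rw [ha, ha']; ring, by field_simp⟩
  · have ha : a ≠ 0 := by
      intro ha
      have h1 : a' * b = 0 := by linear_combination -hd + ha * b'
      rcases mul_eq_zero.mp h1 with h2 | h2
      · exact ha' h2
      · exact h ⟨ha, h2⟩
    refine ⟨a / a', div_ne_zero ha ha', by field_simp, ?_⟩
    field_simp
    linear_combination -hd

lemma mk_eq_of_unit_mul {k K : Type*} [Field k] [Field K] [Algebra k K]
    (u w : Kˣ) (l : k) (hl : l ≠ 0)
    (h : (u : K) = algebraMap k K l * w) :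
    (QuotientGroup.mk u : Kˣ ⧸ (Units.map (algebraMap k K).toMonoidHom).range)
      = QuotientGroup.mk w := by
  rw [QuotientGroup.eq]
  refine ⟨(Units.mk0 l hl)⁻¹, ?_⟩
  ext
  simp only [map_inv, Units.coe_map, Units.coe_map_inv, MonoidHom.coe_coe,
    RingHom.toMonoidHom_eq_coe, Units.val_mul, Units.val_inv_eq_inv_val,
    Units.val_mk0]
  rw [h]
  have hw : (w : K) ≠ 0 := Units.ne_zero w
  have hL : algebraMap k K l ≠ 0 := (map_ne_zero (algebraMap k K)).mpr hl
  field_simp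

/-- Singer's construction: if `k ⊆ K` is a field extension and `θ ∈ K` is such that
`1, θ, θ²` are linearly independent over `k`, then the image of
`{aθ + b : (a, b) ≠ (0, 0)}` in the quotient group `Kˣ/kˣ` is a Sidon set. -/
theorem singer_sidon {k K : Type*} [Field k] [Field K] [Algebra k K]
    (θ : K) (hθ : LinearIndependent k ![1, θ, θ ^ 2]) :
    IsMulSidonSet
      {g : Kˣ ⧸ (Units.map (algebraMap k K).toMonoidHom).range |
        ∃ a b : k, ¬(a = 0 ∧ b = 0) ∧
          ∃ u : Kˣ, (u : K) = algebraMap k K a * θ + algebraMap k K b ∧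
            g = QuotientGroup.mk u} := by
  rintro x₁ ⟨a₁, b₁, h₁, u₁, hu₁, rfl⟩ x₂ ⟨a₂, b₂, h₂, u₂, hu₂, rfl⟩
    x₃ ⟨a₃, b₃, h₃, u₃, hu₃, rfl⟩ x₄ ⟨a₄, b₄, h₄, u₄, hu₄, rfl⟩ heq
  rw [← QuotientGroup.mk_mul, ← QuotientGroup.mk_mul, QuotientGroup.eq] at heq
  obtain ⟨cu, hcu⟩ := heq
  set c : k := (cu : k) with hc
  have hc0 : c ≠ 0 := Units.ne_zero cu
  have h5 : u₁ * u₂ * Units.map (algebraMap k K).toMonoidHom cu = u₃ * u₄ := by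
    rw [hcu]; group
  have h6 : (u₁ : K) * (u₂ : K) * algebraMap k K c = (u₃ : K) * (u₄ : K) := by
    have := congrArg Units.val h5
    push_cast at this
    simpa using this
  rw [hu₁, hu₂, hu₃, hu₄] at h6
  rw [Fintype.linearIndependent_iff] at hθ
  have key := hθ ![c * (b₁ * b₂) - b₃ * b₄,
    c * (a₁ * b₂ + a₂ * b₁) - (a₃ * b₄ + a₄ * b₃),
    c * (a₁ * a₂) - a₃ * a₄] (by
      simp only [Fin.sum_univ_three, Matrix.cons_val_zero, Matrix.cons_val_one,
        Matrix.head_cons, Matrix.cons_val_two, Matrix.tail_cons, Algebra.smul_def,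
        map_sub, map_mul, map_add]
      linear_combination h6)
  have e0 := key 0
  have e1 := key 1
  have e2 := key 2
  simp only [Matrix.cons_val_zero, Matrix.cons_val_one, Matrix.head_cons,
    Matrix.cons_val_two, Matrix.tail_cons] at e0 e1 e2
  have hD : (a₁ * b₃ - a₃ * b₁) * (a₁ * b₄ - a₄ * b₁) = 0 := by
    linear_combination (-a₁ ^ 2) * e0 - b₁ ^ 2 * e2 + a₁ * b₁ * e1
  rcases mul_eq_zero.mp hD with hD3 | hD4
  · obtain ⟨l, hl, hla, hlb⟩ := prop_lemma h₁ h₃ hD3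
    left
    refine mk_eq_of_unit_mul u₁ u₃ l hl ?_
    rw [hu₁, hu₃, hla, hlb, map_mul, map_mul]
    ring
  · obtain ⟨l, hl, hla, hlb⟩ := prop_lemma h₁ h₄ hD4
    right
    refine mk_eq_of_unit_mul u₁ u₄ l hl ?_
    rw [hu₁, hu₄, hla, hlb, map_mul, map_mul]
    ring
end

section
/- Let E be an elliptic curve over a field F given by a Weierstrass equation y² + a₁xy + a₃y = x³ + a₂x² + a₄x + a₆ with nonzero discriminant, and let P₁, P₂, P₃, P₄ be affine (non-identity) points of E(F) satisfying P₁ + P₂ = P₃ + P₄ under the group law. Then L(P₁,P₂) is parallel to L(P₃,P₄) if and only if either {P₁,P₂} = {P₃,P₄} as unordered pairs, or P₂ = −P₁. -/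
open scoped Classical

/-- The direction of the line `L(P,Q)` associated to two affine points
`P = (x₁, y₁)` and `Q = (x₂, y₂)` of a Weierstrass curve `W`: the line through `P`
and `Q` if `P ≠ Q`, and the tangent line to `W` at `P` if `P = Q`. The value is
`none` if this line is vertical and `some m` if it is non-vertical with slope `m`
(the tangent line at `(x₁, y₁)` is vertical iff `2y₁ + a₁x₁ + a₃ = 0`). -/
noncomputable def lineDir {F : Type*} [Field F] (W : WeierstrassCurve.Affine F)
    (x₁ y₁ x₂ y₂ : F) : Option F :=
  if (x₁, y₁) = (x₂, y₂) then
    if 2 * y₁ + W.a₁ * x₁ + W.a₃ = 0 then none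
    else some ((3 * x₁ ^ 2 + 2 * W.a₂ * x₁ + W.a₄ - W.a₁ * y₁) /
      (2 * y₁ + W.a₁ * x₁ + W.a₃))
  else if x₁ = x₂ then none
  else some ((y₂ - y₁) / (x₂ - x₁))

section Aux

open Polynomial WeierstrassCurve.Affine

variable {F : Type*} [Field F] {W : WeierstrassCurve.Affine F}

lemma vert_iff' {x₁ y₁ x₂ y₂ : F} (hx : x₁ = x₂) :
    y₂ = W.negY x₁ y₁ ↔ y₁ = W.negY x₂ y₂ := by
  subst hx
  simp only [WeierstrassCurve.Affine.negY]
  constructor <;> intro h <;> linear_combination h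

lemma lineDir_eq' {x₁ y₁ x₂ y₂ : F} (h₁ : W.Equation x₁ y₁) (h₂ : W.Equation x₂ y₂) :
    lineDir W x₁ y₁ x₂ y₂ =
      if x₁ = x₂ ∧ y₁ = W.negY x₂ y₂ then none else some (W.slope x₁ x₂ y₁ y₂) := by
  unfold lineDir
  by_cases hP : (x₁, y₁) = (x₂, y₂)
  · rw [Prod.mk.injEq] at hP
    obtain ⟨hx, hy⟩ := hP
    subst hx; subst hy
    rw [if_pos rfl]
    by_cases hy : y₁ = W.negY x₁ y₁
    · rw [if_pos (show 2 * y₁ + W.a₁ * x₁ + W.a₃ = 0 by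
        simp only [WeierstrassCurve.Affine.negY] at hy; linear_combination hy), if_pos ⟨rfl, hy⟩]
    · have hd : 2 * y₁ + W.a₁ * x₁ + W.a₃ ≠ 0 := by
        intro h
        exact hy (by simp only [WeierstrassCurve.Affine.negY]; linear_combination h)
      rw [if_neg hd, if_neg (by rintro ⟨-, h⟩; exact hy h),
        WeierstrassCurve.Affine.slope_of_Y_ne rfl hy]
      congr 1
      simp only [WeierstrassCurve.Affine.negY]
      ring
  · rw [if_neg hP]
    by_cases hx : x₁ = x₂
    · rw [if_pos hx]
      have hy' : y₁ ≠ y₂ := fun h => hP (by rw [hx, h])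
      have hv : y₁ = W.negY x₂ y₂ :=
        (WeierstrassCurve.Affine.Y_eq_of_X_eq h₁ h₂ hx).resolve_left hy'
      rw [if_pos ⟨hx, hv⟩]
    · rw [if_neg hx, if_neg (fun h => hx h.1), WeierstrassCurve.Affine.slope_of_X_ne hx,
        show y₁ - y₂ = -(y₂ - y₁) by ring, show x₁ - x₂ = -(x₂ - x₁) by ring, neg_div_neg_eq]

lemma lineDir_comm' (W : WeierstrassCurve.Affine F) (x₁ y₁ x₂ y₂ : F) :
    lineDir W x₁ y₁ x₂ y₂ = lineDir W x₂ y₂ x₁ y₁ := by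
  unfold lineDir
  by_cases hP : (x₁, y₁) = (x₂, y₂)
  · rw [Prod.mk.injEq] at hP
    obtain ⟨hx, hy⟩ := hP
    subst hx; subst hy
    rfl
  · have hP' : (x₂, y₂) ≠ (x₁, y₁) := fun h => hP h.symm
    rw [if_neg hP, if_neg hP']
    by_cases hx : x₁ = x₂
    · rw [if_pos hx, if_pos hx.symm]
    · rw [if_neg hx, if_neg (Ne.symm hx), ← neg_sub y₂ y₁, ← neg_sub x₂ x₁, neg_div_neg_eq]

lemma on_line' {x₁ y₁ x₂ y₂ : F} (h₁ : W.Equation x₁ y₁) (h₂ : W.Equation x₂ y₂)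
    (hv : ¬(x₁ = x₂ ∧ y₁ = W.negY x₂ y₂)) :
    y₂ - W.slope x₁ x₂ y₁ y₂ * x₂ = y₁ - W.slope x₁ x₂ y₁ y₂ * x₁ := by
  by_cases hx : x₁ = x₂
  · have hy : y₁ = y₂ := by
      rcases WeierstrassCurve.Affine.Y_eq_of_X_eq h₁ h₂ hx with h | h
      · exact h
      · exact absurd ⟨hx, h⟩ hv
    rw [hx, hy]
  · rw [WeierstrassCurve.Affine.slope_of_X_ne hx]
    field_simp [sub_ne_zero.mpr hx]
    ring

lemma pairs_eq' {x₁ y₁ x₂ y₂ x₃ y₃ x₄ y₄ ℓ : F}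
    (h₁ : W.Equation x₁ y₁) (h₂ : W.Equation x₂ y₂)
    (h₃ : W.Equation x₃ y₃) (h₄ : W.Equation x₄ y₄)
    (hv₁ : ¬(x₁ = x₂ ∧ y₁ = W.negY x₂ y₂)) (hv₂ : ¬(x₃ = x₄ ∧ y₃ = W.negY x₄ y₄))
    (hs₁ : W.slope x₁ x₂ y₁ y₂ = ℓ) (hs₂ : W.slope x₃ x₄ y₃ y₄ = ℓ)
    (hx₅ : W.addX x₁ x₂ ℓ = W.addX x₃ x₄ ℓ)
    (hc : y₁ - ℓ * x₁ = y₃ - ℓ * x₃) :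
    ({(x₁, y₁), (x₂, y₂)} : Set (F × F)) = {(x₃, y₃), (x₄, y₄)} := by
  have hxy₁ : x₁ = x₂ → y₁ ≠ W.negY x₂ y₂ := fun hx hy => hv₁ ⟨hx, hy⟩
  have hxy₂ : x₃ = x₄ → y₃ ≠ W.negY x₄ y₄ := fun hx hy => hv₂ ⟨hx, hy⟩
  have hp₁ := WeierstrassCurve.Affine.addPolynomial_slope h₁ h₂ hv₁
  have hp₂ := WeierstrassCurve.Affine.addPolynomial_slope h₃ h₄ hv₂
  rw [hs₁] at hp₁
  rw [hs₂] at hp₂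
  have hl₁ : y₂ - ℓ * x₂ = y₁ - ℓ * x₁ := by rw [← hs₁]; exact on_line' h₁ h₂ hv₁
  have hl₂ : y₄ - ℓ * x₄ = y₃ - ℓ * x₃ := by rw [← hs₂]; exact on_line' h₃ h₄ hv₂
  have hline : W.addPolynomial x₁ y₁ ℓ = W.addPolynomial x₃ y₃ ℓ := by
    have hC : (C y₁ : F[X]) - C ℓ * C x₁ = C y₃ - C ℓ * C x₃ := by
      simpa only [map_sub, map_mul] using congrArg (C : F → F[X]) hc
    simp only [WeierstrassCurve.Affine.addPolynomial, WeierstrassCurve.Affine.linePolynomial]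
    congr 1
    linear_combination hC
  rw [hp₁, hp₂, hx₅, neg_inj] at hline
  have hquad : (X - C x₁) * (X - C x₂) = (X - C x₃) * (X - C x₄) :=
    mul_right_cancel₀ (X_sub_C_ne_zero _) hline
  have hev := congrArg (eval x₁) hquad
  simp only [eval_mul, eval_sub, eval_X, eval_C, sub_self, zero_mul] at hev
  rcases mul_eq_zero.mp hev.symm with h | h
  · have hx13 : x₁ = x₃ := sub_eq_zero.mp h
    have hx24 : x₂ = x₄ := by
      rw [← hx13] at hquad
      have h' := mul_left_cancel₀ (X_sub_C_ne_zero x₁) hquad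
      have h'' : (C x₂ : F[X]) = C x₄ := by linear_combination -h'
      exact C_injective h''
    have hy13 : y₁ = y₃ := by rw [hx13] at hc; linear_combination hc
    have hy24 : y₂ = y₄ := by linear_combination hl₁ - hl₂ + hc + ℓ * hx24
    rw [hx13, hx24, hy13, hy24]
  · have hx14 : x₁ = x₄ := sub_eq_zero.mp h
    rw [← hx14, mul_comm (X - C x₃)] at hquad
    have h' := mul_left_cancel₀ (X_sub_C_ne_zero x₁) hquad
    have hx23 : x₂ = x₃ := C_injective (show (C x₂ : F[X]) = C x₃ by linear_combination -h')
    have hy14 : y₁ = y₄ := by linear_combination hc - hl₂ + ℓ * hx14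
    have hy23 : y₂ = y₃ := by linear_combination hl₁ + hc + ℓ * hx23
    rw [hx14, hx23, hy14, hy23, Set.pair_comm]

end Aux

/-- Let `P₁, P₂, P₃, P₄` be affine points of an elliptic curve (a Weierstrass curve
with nonzero discriminant) with `P₁ + P₂ = P₃ + P₄`. Then the line `L(P₁,P₂)` is
parallel to `L(P₃,P₄)` (same direction: both vertical, or equal slopes) iff
`{P₁, P₂} = {P₃, P₄}` as unordered pairs or `P₂ = -P₁`. -/
theorem line_parallel_iff {F : Type*} [Field F] (W : WeierstrassCurve.Affine F)
    (hΔ : W.Δ ≠ 0) {x₁ y₁ x₂ y₂ x₃ y₃ x₄ y₄ : F}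
    (h₁ : W.Nonsingular x₁ y₁) (h₂ : W.Nonsingular x₂ y₂)
    (h₃ : W.Nonsingular x₃ y₃) (h₄ : W.Nonsingular x₄ y₄)
    (hadd : WeierstrassCurve.Affine.Point.some _ _ h₁ + WeierstrassCurve.Affine.Point.some _ _ h₂ =
      WeierstrassCurve.Affine.Point.some _ _ h₃ + WeierstrassCurve.Affine.Point.some _ _ h₄) :
    lineDir W x₁ y₁ x₂ y₂ = lineDir W x₃ y₃ x₄ y₄ ↔
      (({(x₁, y₁), (x₂, y₂)} : Set (F × F)) = {(x₃, y₃), (x₄, y₄)} ∨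
        WeierstrassCurve.Affine.Point.some _ _ h₂ = -WeierstrassCurve.Affine.Point.some _ _ h₁) := by
  open WeierstrassCurve.Affine WeierstrassCurve.Affine.Point in
  by_cases hv₁ : x₁ = x₂ ∧ y₁ = W.negY x₂ y₂
  · have hz₁ : Point.some _ _ h₁ + Point.some _ _ h₂ = 0 := add_of_Y_eq hv₁.1 hv₁.2
    have hz₂ : Point.some _ _ h₃ + Point.some _ _ h₄ = 0 := by rw [← hadd]; exact hz₁
    have hv₂ : x₃ = x₄ ∧ y₃ = W.negY x₄ y₄ := by
      by_contra hv₂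
      rw [add_some hv₂] at hz₂
      exact some_ne_zero _ hz₂
    have hneg : Point.some _ _ h₂ = -Point.some _ _ h₁ := by
      obtain ⟨hx, hy⟩ := hv₁
      subst hx
      have hy₂ : y₂ = W.negY x₁ y₁ := (vert_iff' rfl).mpr hy
      subst hy₂
      rw [neg_some]
    rw [lineDir_eq' h₁.1 h₂.1, lineDir_eq' h₃.1 h₄.1, if_pos hv₁, if_pos hv₂]
    exact iff_of_true rfl (Or.inr hneg)
  · have hnegP : ¬(Point.some _ _ h₂ = -Point.some _ _ h₁) := by
      rw [neg_some]
      intro h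
      injection h with hx hy
      exact hv₁ ⟨hx.symm, (vert_iff' hx.symm).mp hy⟩
    have hxy₁ : x₁ = x₂ → y₁ ≠ W.negY x₂ y₂ := fun hx hy => hv₁ ⟨hx, hy⟩
    by_cases hv₂ : x₃ = x₄ ∧ y₃ = W.negY x₄ y₄
    · rw [add_some hv₁, add_of_Y_eq hv₂.1 hv₂.2] at hadd
      exact absurd hadd (some_ne_zero _)
    · have hxy₂ : x₃ = x₄ → y₃ ≠ W.negY x₄ y₄ := fun hx hy => hv₂ ⟨hx, hy⟩
      rw [add_some hv₁, add_some hv₂] at hadd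
      injection hadd with hX hY
      constructor
      · intro hpar
        rw [lineDir_eq' h₁.1 h₂.1, lineDir_eq' h₃.1 h₄.1, if_neg hv₁, if_neg hv₂,
          Option.some_inj] at hpar
        set ℓ := W.slope x₁ x₂ y₁ y₂ with hℓ
        rw [← hpar] at hX hY
        have hN : W.negAddY x₁ x₂ y₁ ℓ = W.negAddY x₃ x₄ y₃ ℓ := by
          simp only [WeierstrassCurve.Affine.addY] at hY
          rw [hX] at hY
          simp only [WeierstrassCurve.Affine.negY] at hY
          linear_combination -hY
        have hc : y₁ - ℓ * x₁ = y₃ - ℓ * x₃ := by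
          simp only [WeierstrassCurve.Affine.negAddY] at hN
          rw [hX] at hN
          linear_combination hN
        exact Or.inl (pairs_eq' h₁.1 h₂.1 h₃.1 h₄.1 hv₁ hv₂ rfl hpar.symm hX hc)
      · rintro (hset | hneg)
        · rcases Set.pair_eq_pair_iff.mp hset with ⟨h13, h24⟩ | ⟨h14, h23⟩
          · rw [Prod.mk.injEq] at h13 h24
            obtain ⟨hx13, hy13⟩ := h13
            obtain ⟨hx24, hy24⟩ := h24
            rw [hx13, hy13, hx24, hy24]
          · rw [Prod.mk.injEq] at h14 h23
            obtain ⟨hx14, hy14⟩ := h14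
            obtain ⟨hx23, hy23⟩ := h23
            rw [hx14, hy14, hx23, hy23]
            exact lineDir_comm' W x₄ y₄ x₃ y₃
        · exact absurd hneg hnegP
end

section
/- Let A be an abelian group without 2-torsion (i.e., 2x = 0 implies x = 0), and let S ⊆ A be a finite symmetric Sidon set with center a. Then there exists a Sidon set T ⊆ S with 2·|T| ≥ |S| − 1 (obtained by choosing one element of each pair {x, a − x} with 2x ≠ a). -/
/-- A subset `S` of an abelian group is a *symmetric Sidon set with center `a`* if
`S = a - S` and every additive quadruple `x₁ + x₂ = x₃ + x₄` in `S` satisfies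
`x₁ = x₃`, `x₁ = x₄`, or `x₂ = a - x₁`. -/
def IsSymmetricSidonSet {A : Type*} [AddCommGroup A] (S : Set A) (a : A) : Prop :=
  (∀ x : A, x ∈ S ↔ a - x ∈ S) ∧
    ∀ x₁ ∈ S, ∀ x₂ ∈ S, ∀ x₃ ∈ S, ∀ x₄ ∈ S,
      x₁ + x₂ = x₃ + x₄ → x₁ = x₃ ∨ x₁ = x₄ ∨ x₂ = a - x₁

private lemma aux_pick {A : Type*} [AddCommGroup A] [DecidableEq A] (a : A) :
    ∀ S : Finset A, (∀ x : A, x ∈ S ↔ a - x ∈ S) → (∀ x ∈ S, a - x ≠ x) →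
      ∃ T : Finset A, T ⊆ S ∧ (∀ x ∈ T, a - x ∉ T) ∧ S.card ≤ 2 * T.card := by
  intro S
  induction S using Finset.strongInduction with
  | _ S ih =>
    intro hsym hnf
    rcases S.eq_empty_or_nonempty with rfl | ⟨x, hx⟩
    · exact ⟨∅, Finset.Subset.refl _, by simp, by simp⟩
    · have hax : a - x ∈ S := (hsym x).1 hx
      have hne : a - x ≠ x := hnf x hx
      set S' := S \ {x, a - x} with hS'
      have hsub : S' ⊂ S := by
        refine Finset.sdiff_ssubset ?_ (by simp)
        intro y hy
        simp at hy
        rcases hy with rfl | rfl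
        · exact hx
        · exact hax
      have hsym' : ∀ y : A, y ∈ S' ↔ a - y ∈ S' := by
        intro y
        simp only [hS', Finset.mem_sdiff, Finset.mem_insert, Finset.mem_singleton]
        constructor
        · rintro ⟨hyS, hy⟩
          push_neg at hy
          refine ⟨(hsym y).1 hyS, ?_⟩
          push_neg
          constructor
          · intro h; exact hy.2 (by rw [← h]; abel)
          · intro h
            apply hy.1
            have h' := congrArg (fun t => a - t) h
            simpa using h'
        · rintro ⟨hyS, hy⟩
          push_neg at hy
          have hyS2 : y ∈ S := by
            have := (hsym y).2 hyS; exact this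
          refine ⟨hyS2, ?_⟩
          push_neg
          constructor
          · intro h; subst h; exact hy.2 rfl
          · intro h; apply hy.1; rw [h]; abel
      have hnf' : ∀ y ∈ S', a - y ≠ y := by
        intro y hy
        exact hnf y (Finset.mem_sdiff.1 hy).1
      obtain ⟨T', hT'sub, hT'p, hT'c⟩ := ih S' hsub hsym' hnf'
      refine ⟨insert x T', ?_, ?_, ?_⟩
      · intro y hy
        rcases Finset.mem_insert.1 hy with rfl | hy
        · exact hx
        · exact (Finset.mem_sdiff.1 (hT'sub hy)).1
      · intro y hy hay
        rcases Finset.mem_insert.1 hy with rfl | hy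
        · rcases Finset.mem_insert.1 hay with h | h
          · exact hne h
          · have := (Finset.mem_sdiff.1 (hT'sub h)).2
            simp at this
          -- done
        · rcases Finset.mem_insert.1 hay with h | h
          · have hyS' := Finset.mem_sdiff.1 (hT'sub hy)
            apply hyS'.2
            simp only [Finset.mem_insert, Finset.mem_singleton]
            right
            rw [← h]; abel
          · exact hT'p y hy h
      · have hxT' : x ∉ T' := by
          intro h
          have := (Finset.mem_sdiff.1 (hT'sub h)).2
          simp at this
        rw [Finset.card_insert_of_notMem hxT']
        have hcard : S.card ≤ S'.card + 2 := by
          have : S ⊆ insert x (insert (a - x) S') := by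
            intro y hy
            by_cases h1 : y = x
            · simp [h1]
            by_cases h2 : y = a - x
            · simp [h2]
            · simp only [Finset.mem_insert]
              right; right
              rw [hS', Finset.mem_sdiff]
              exact ⟨hy, by simp [h1, h2]⟩
          calc S.card ≤ (insert x (insert (a - x) S')).card := Finset.card_le_card this
            _ ≤ (insert (a - x) S').card + 1 := Finset.card_insert_le _ _
            _ ≤ S'.card + 1 + 1 := by
                have := Finset.card_insert_le (a - x) S'
                omega
        omega

/-- A finite symmetric Sidon set with center `a` in an abelian group without
`2`-torsion contains a Sidon subset `T` with `2 * |T| ≥ |S| - 1`. -/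
theorem desymmetrize {A : Type*} [AddCommGroup A]
    (h2 : ∀ x : A, x + x = 0 → x = 0)
    (a : A) (S : Finset A) (hS : IsSymmetricSidonSet (S : Set A) a) :
    ∃ T : Finset A, T ⊆ S ∧ IsSidonSet (T : Set A) ∧
      (S.card : ℤ) - 1 ≤ 2 * T.card := by
  classical
  obtain ⟨hsym, hsid⟩ := hS
  set S₀ := S.filter (fun x => a - x ≠ x) with hS₀
  have hsym₀ : ∀ x : A, x ∈ S₀ ↔ a - x ∈ S₀ := by
    intro x
    simp only [hS₀, Finset.mem_filter]
    constructor
    · rintro ⟨hx, hne⟩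
      refine ⟨(hsym x).1 (by exact_mod_cast hx), ?_⟩
      intro h
      apply hne
      have : a - (a - x) = a - x := h
      have hx2 : x = a - x := by rw [← this]; abel
      exact hx2.symm
    · rintro ⟨hx, hne⟩
      have hxS : (x : A) ∈ (S : Set A) := (hsym x).2 hx
      refine ⟨by exact_mod_cast hxS, ?_⟩
      intro h
      apply hne
      rw [h]; exact h
  have hnf₀ : ∀ x ∈ S₀, a - x ≠ x := fun x hx => (Finset.mem_filter.1 hx).2
  obtain ⟨T, hTsub, hTp, hTc⟩ := aux_pick a S₀ hsym₀ hnf₀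
  have hTS : T ⊆ S := hTsub.trans (Finset.filter_subset _ _)
  refine ⟨T, hTS, ?_, ?_⟩
  · intro x₁ h₁ x₂ h₂ x₃ h₃ x₄ h₄ heq
    have m : ∀ y ∈ T, (y : A) ∈ (S : Set A) := fun y hy => by exact_mod_cast hTS hy
    rcases hsid x₁ (m _ h₁) x₂ (m _ h₂) x₃ (m _ h₃) x₄ (m _ h₄) heq with h | h | h
    · exact Or.inl h
    · exact Or.inr h
    · exfalso
      exact hTp x₁ h₁ (by rw [← h]; exact_mod_cast h₂)
  · -- card bound: S.card ≤ S₀.card + 1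
    have hone : (S \ S₀).card ≤ 1 := by
      rw [Finset.card_le_one]
      intro x hx y hy
      have hx' : a - x = x := by
        have := Finset.mem_sdiff.1 hx
        simp only [hS₀, Finset.mem_filter, not_and, not_not] at this
        exact this.2 this.1
      have hy' : a - y = y := by
        have := Finset.mem_sdiff.1 hy
        simp only [hS₀, Finset.mem_filter, not_and, not_not] at this
        exact this.2 this.1
      have : (x - y) + (x - y) = 0 := by
        have h1 : x + x = a := (sub_eq_iff_eq_add.mp hx').symm
        have h2 : y + y = a := (sub_eq_iff_eq_add.mp hy').symm
        have : x + x - (y + y) = 0 := by rw [h1, h2]; abel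
        calc (x - y) + (x - y) = x + x - (y + y) := by abel
          _ = 0 := this
      have := h2 _ this
      exact sub_eq_zero.1 this
    have hsplit : S.card ≤ S₀.card + 1 := by
      have := Finset.card_sdiff_add_card_eq_card (Finset.filter_subset (fun x => a - x ≠ x) S)
      rw [← hS₀] at this
      omega
    have : S₀.card ≤ 2 * T.card := hTc
    omega
end

section
/- Let A be an abelian group whose 2-torsion subgroup {x ∈ A : 2x = 0} is finite of order t, let S ⊆ A be a symmetric Sidon set with center a, and let S′ be a finite subset of S. Then S′ contains a Sidon subset T with 2·|T| ≥ |S′| − t. -/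
/-- If the `2`-torsion subgroup of an abelian group `A` is finite of order `t`,
`S ⊆ A` is a symmetric Sidon set with center `a`, and `S'` is a finite subset of
`S`, then `S'` contains a Sidon subset `T` with `2 * |T| ≥ |S'| - t`. -/
theorem desymmetrize_torsion {A : Type*} [AddCommGroup A] (t : ℕ)
    (h2fin : {x : A | x + x = 0}.Finite) (h2card : {x : A | x + x = 0}.ncard = t)
    (a : A) (S : Set A) (hS : IsSymmetricSidonSet S a)
    (S' : Finset A) (hS' : (S' : Set A) ⊆ S) :
    ∃ T : Finset A, T ⊆ S' ∧ IsSidonSet (T : Set A) ∧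
      (S'.card : ℤ) - t ≤ 2 * T.card := by
  classical
  letI : LinearOrder A := linearOrderOfSTO WellOrderingRel
  obtain ⟨hsym, hsid⟩ := hS
  set T := S'.filter (fun x => x + x ≠ a ∧ (a - x ∉ S' ∨ x < a - x)) with hTdef
  refine ⟨T, Finset.filter_subset _ _, ?_, ?_⟩
  · intro x₁ h1 x₂ h2 x₃ h3 x₄ h4 heq
    simp only [hTdef, Finset.mem_coe, Finset.mem_filter] at h1 h2 h3 h4
    have hx1 : x₁ ∈ S := hS' h1.1
    have hx2 : x₂ ∈ S := hS' h2.1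
    have hx3 : x₃ ∈ S := hS' h3.1
    have hx4 : x₄ ∈ S := hS' h4.1
    rcases hsid x₁ hx1 x₂ hx2 x₃ hx3 x₄ hx4 heq with h | h | h
    · exact Or.inl h
    · exact Or.inr h
    · exfalso
      by_cases hxx : x₁ = x₂
      · exact h1.2.1 (eq_sub_iff_add_eq.mp (hxx.trans h))
      · have h12 : a - x₁ = x₂ := h.symm
        have h21 : a - x₂ = x₁ := by rw [← h12]; abel
        have l1 : x₁ < x₂ := by
          rcases h1.2.2 with hn | hlt
          · exact absurd (h12 ▸ h2.1) hn
          · rwa [h12] at hlt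
        have l2 : x₂ < x₁ := by
          rcases h2.2.2 with hn | hlt
          · exact absurd (h21 ▸ h1.1) hn
          · rwa [h21] at hlt
        exact absurd l1 (not_lt.mpr l2.le)
  · set F := S'.filter (fun x => x + x = a) with hFdef
    have hFcard : F.card ≤ t := by
      rcases F.eq_empty_or_nonempty with he | ⟨c, hc⟩
      · simp [he]
      · have hc' := Finset.mem_filter.mp hc
        rw [← h2card, Set.ncard_eq_toFinset_card _ h2fin]
        refine Finset.card_le_card_of_injOn (fun x => x - c) ?_ ?_
        · intro x hx
          have hx' := Finset.mem_filter.mp hx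
          simp only [Finset.mem_coe, Set.Finite.mem_toFinset, Set.mem_setOf_eq]
          have : (x - c) + (x - c) = (x + x) - (c + c) := by abel
          rw [this, hx'.2, hc'.2, sub_self]
        · intro x _ y _ hxy
          exact sub_left_injective hxy
    have hsplit : F.card + (S'.filter (fun x => ¬ x + x = a)).card = S'.card :=
      Finset.card_filter_add_card_filter_not _
    set R := S'.filter (fun x => ¬ x + x = a) with hRdef
    have hsub : R ⊆ T ∪ T.image (fun x => a - x) := by
      intro x hx
      have hx' := Finset.mem_filter.mp hx
      have hne : x ≠ a - x := by
        intro h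
        exact hx'.2 (eq_sub_iff_add_eq.mp h)
      by_cases hmem : a - x ∈ S'
      · rcases lt_or_gt_of_ne hne with hlt | hgt
        · exact Finset.mem_union_left _ (Finset.mem_filter.mpr ⟨hx'.1, hx'.2, Or.inr hlt⟩)
        · refine Finset.mem_union_right _ (Finset.mem_image.mpr ⟨a - x, ?_, by abel⟩)
          refine Finset.mem_filter.mpr ⟨hmem, ?_, Or.inr ?_⟩
          · intro hc
            apply hx'.2
            rw [sub_add_sub_comm, sub_eq_iff_eq_add] at hc
            exact (add_left_cancel hc).symm
          · have : a - (a - x) = x := by abel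
            rw [this]; exact hgt
      · exact Finset.mem_union_left _ (Finset.mem_filter.mpr ⟨hx'.1, hx'.2, Or.inl hmem⟩)
    have hR : R.card ≤ 2 * T.card := by
      calc R.card ≤ (T ∪ T.image (fun x => a - x)).card := Finset.card_le_card hsub
        _ ≤ T.card + (T.image (fun x => a - x)).card := Finset.card_union_le _ _
        _ ≤ T.card + T.card := Nat.add_le_add_left Finset.card_image_le _
        _ = 2 * T.card := by ring
    have : S'.card ≤ t + 2 * T.card := by omega
    omega
end
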